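/- If λ₀,...,λ_N are real numbers (pairwise distinct), then the fundamental function Φ_{(λ₀,...,λ_N)}(t) = Σⱼ e^{λⱼ t}/∏_{k≠j}(λⱼ - λ_k) is strictly positive for all t > 0. -/

import Mathlib

open Real Finset

/-- The fundamental exponential polynomial for pairwise distinct real frequencies. -/
noncomputable def fundPhi {N : ℕ} (μ : Fin N → ℝ) (t : ℝ) : ℝ :=
  ∑ j, Real.exp (μ j * t) / ∏ k ∈ Finset.univ.erase j, (μ j - μ k)

open Polynomial in
lemma leadingCoeff_lagrange_basis {n : ℕ} (v : Fin n → ℝ) (hv : Function.Injective v)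
    (j : Fin n) :
    (Lagrange.basis Finset.univ v j).leadingCoeff
      = ∏ k ∈ Finset.univ.erase j, (v j - v k)⁻¹ := by
  rw [Lagrange.basis, leadingCoeff_prod]
  refine Finset.prod_congr rfl fun k hk => ?_
  rw [Lagrange.basisDivisor, leadingCoeff_mul, leadingCoeff_C, leadingCoeff_X_sub_C, mul_one]

open Polynomial in
lemma partial_fraction_sum {n : ℕ} (v : Fin (n + 2) → ℝ) (hv : Function.Injective v) :
    ∑ j, (∏ k ∈ Finset.univ.erase j, (v j - v k))⁻¹ = 0 := by
  have hsum := Lagrange.sum_basis (s := Finset.univ) (v := v) hv.injOn ⟨0, Finset.mem_univ 0⟩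
  have h := congrArg (fun p : ℝ[X] => p.coeff (n + 1)) hsum
  simp only [Polynomial.finset_sum_coeff] at h
  rw [Polynomial.coeff_one] at h
  norm_num at h
  rw [← h]
  refine (Finset.sum_congr rfl fun j _ => ?_).symm
  have hdeg : (Lagrange.basis Finset.univ v j).natDegree = n + 1 := by
    rw [Lagrange.natDegree_basis hv.injOn (Finset.mem_univ j)]
    simp
  rw [← hdeg, Polynomial.coeff_natDegree, leadingCoeff_lagrange_basis v hv,
    ← Finset.prod_inv_distrib]

lemma int_exp_mul (c t : ℝ) (hc : c ≠ 0) :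
    ∫ s in (0:ℝ)..t, Real.exp (c * s) = (Real.exp (c * t) - 1) / c := by
  have := intervalIntegral.integral_comp_mul_left (fun x => Real.exp x) (a := 0) (b := t) (c := c)
  rw [integral_exp] at this
  rw [this hc]
  rw [mul_zero, Real.exp_zero, smul_eq_mul]
  field_simp [mul_comm]

lemma int_exp_conv (a b t : ℝ) (hab : b ≠ a) :
    ∫ s in (0:ℝ)..t, Real.exp (a * (t - s)) * Real.exp (b * s)
      = (Real.exp (b * t) - Real.exp (a * t)) / (b - a) := by
  have h1 : ∀ s : ℝ, Real.exp (a * (t - s)) * Real.exp (b * s)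
      = Real.exp (a * t) * Real.exp ((b - a) * s) := by
    intro s; rw [← Real.exp_add, ← Real.exp_add]; ring_nf
  simp_rw [h1]
  rw [intervalIntegral.integral_const_mul, int_exp_mul _ _ (sub_ne_zero.mpr hab)]
  have h2 : Real.exp (a*t) * Real.exp ((b-a)*t) = Real.exp (b*t) := by
    rw [← Real.exp_add]; ring_nf
  field_simp
  rw [mul_sub, mul_comm t (b - a), h2, mul_one, mul_comm t b]

lemma erase_castSucc_eq {N : ℕ} (j : Fin (N+1)) :
    (Finset.univ : Finset (Fin (N+1+1))).erase j.castSucc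
      = insert (Fin.last (N+1)) ((Finset.univ.erase j).image Fin.castSucc) := by
  ext k
  simp only [Finset.mem_erase, Finset.mem_univ, and_true, Finset.mem_insert, Finset.mem_image,
    true_and]
  constructor
  · intro hk
    rcases Fin.eq_castSucc_or_eq_last k with ⟨m, rfl⟩ | rfl
    · exact Or.inr ⟨m, fun h => hk (by rw [h]), rfl⟩
    · exact Or.inl rfl
  · rintro (rfl | ⟨m, hm, rfl⟩)
    · exact (Fin.castSucc_lt_last j).ne'
    · exact fun h => hm (Fin.castSucc_injective _ h)

lemma prod_erase_castSucc {N : ℕ} (l : Fin (N+1+1) → ℝ) (j : Fin (N+1)) :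
    ∏ k ∈ Finset.univ.erase j.castSucc, (l j.castSucc - l k)
      = (l j.castSucc - l (Fin.last (N+1)))
        * ∏ k ∈ Finset.univ.erase j, (l j.castSucc - l k.castSucc) := by
  rw [erase_castSucc_eq, Finset.prod_insert, Finset.prod_image]
  · intro a _ b _ h; exact Fin.castSucc_injective _ h
  · simp only [Finset.mem_image]
    rintro ⟨m, _, hm⟩
    exact (Fin.castSucc_lt_last m).ne hm

lemma continuous_fundPhi {N : ℕ} (μ : Fin N → ℝ) : Continuous (fundPhi μ) := by
  unfold fundPhi
  exact continuous_finset_sum _ fun j _ => ((Real.continuous_exp.comp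
    (continuous_const.mul continuous_id)).div_const _)

lemma fundPhi_rec {N : ℕ} (l : Fin (N+1+1) → ℝ) (hinj : Function.Injective l) (t : ℝ) :
    fundPhi l t = ∫ s in (0:ℝ)..t,
      Real.exp (l (Fin.last (N+1)) * (t - s)) * fundPhi (l ∘ Fin.castSucc) s := by
  set a := l (Fin.last (N+1)) with ha
  set P : Fin (N+1) → ℝ := fun j => ∏ k ∈ Finset.univ.erase j, (l j.castSucc - l k.castSucc)
    with hP
  set Q : Fin (N+1) → ℝ := fun j => (l j.castSucc - a) * P j with hQ
  set R : ℝ := ∏ k ∈ Finset.univ.erase (Fin.last (N+1)), (a - l k) with hR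
  have hba : ∀ j : Fin (N+1), l j.castSucc - a ≠ 0 := fun j =>
    sub_ne_zero.mpr (fun h => (Fin.castSucc_lt_last j).ne (hinj h))
  have hPne : ∀ j : Fin (N+1), P j ≠ 0 := by
    intro j
    refine Finset.prod_ne_zero_iff.mpr fun k hk => sub_ne_zero.mpr fun h => ?_
    exact (Finset.mem_erase.mp hk).1 ((Fin.castSucc_injective _ (hinj h))).symm
  have hLHS : fundPhi l t = (∑ j : Fin (N+1), Real.exp (l j.castSucc * t) * (Q j)⁻¹)
      + Real.exp (a * t) * R⁻¹ := by
    have h1 : ∀ j : Fin (N+1), Real.exp (l j.castSucc * t)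
        / ∏ k ∈ Finset.univ.erase j.castSucc, (l j.castSucc - l k)
          = Real.exp (l j.castSucc * t) * (Q j)⁻¹ := fun j => by
      rw [prod_erase_castSucc l j, div_eq_mul_inv]
    rw [fundPhi, Fin.sum_univ_castSucc]
    simp_rw [h1]
    rw [div_eq_mul_inv]
  have hpf : (∑ j : Fin (N+1), (Q j)⁻¹) = -R⁻¹ := by
    have h0 := partial_fraction_sum l hinj
    rw [Fin.sum_univ_castSucc] at h0
    have : ∀ j : Fin (N+1),
        (∏ k ∈ Finset.univ.erase j.castSucc, (l j.castSucc - l k))⁻¹ = (Q j)⁻¹ := fun j => by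
      rw [prod_erase_castSucc l j]
    simp_rw [this] at h0
    linarith [h0]
  have hintgd : ∀ s : ℝ, Real.exp (a * (t - s)) * fundPhi (l ∘ Fin.castSucc) s
      = ∑ j : Fin (N+1),
        Real.exp (a * (t - s)) * Real.exp (l j.castSucc * s) / P j := by
    intro s
    rw [fundPhi, Finset.mul_sum]
    refine Finset.sum_congr rfl fun j _ => ?_
    simp only [Function.comp_apply]
    rw [mul_div_assoc]
  simp_rw [hintgd]
  rw [intervalIntegral.integral_finset_sum]
  · have hterm : ∀ j : Fin (N+1),
        (∫ s in (0:ℝ)..t, Real.exp (a * (t - s)) * Real.exp (l j.castSucc * s) / P j)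
          = Real.exp (l j.castSucc * t) * (Q j)⁻¹ - Real.exp (a * t) * (Q j)⁻¹ := by
      intro j
      rw [intervalIntegral.integral_div, int_exp_conv a (l j.castSucc) t
        (sub_ne_zero.mp (hba j))]
      rw [div_div, hQ]
      rw [div_eq_mul_inv, sub_mul]
    simp_rw [hterm]
    rw [Finset.sum_sub_distrib, ← Finset.mul_sum, hpf, hLHS]
    ring
  · intro j _
    apply Continuous.intervalIntegrable
    exact (((Real.continuous_exp.comp (continuous_const.mul
      (continuous_const.sub continuous_id))).mul (Real.continuous_exp.comp
      (continuous_const.mul continuous_id))).div_const _)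

theorem stmt_14 (N : ℕ) (l : Fin (N + 1) → ℝ) (hinj : Function.Injective l) :
    ∀ t : ℝ, 0 < t → 0 < fundPhi l t := by
  induction N with
  | zero =>
    intro t ht
    have : fundPhi l t = Real.exp (l 0 * t) := by
      rw [fundPhi]
      simp [Finset.sum_fin_eq_sum_range]
    rw [this]
    exact Real.exp_pos _
  | succ n ih =>
    intro t ht
    rw [fundPhi_rec l hinj t]
    have hcont : Continuous fun s =>
        Real.exp (l (Fin.last (n+1)) * (t - s)) * fundPhi (l ∘ Fin.castSucc) s :=
      (Real.continuous_exp.comp (continuous_const.mul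
        (continuous_const.sub continuous_id))).mul (continuous_fundPhi _)
    refine intervalIntegral.intervalIntegral_pos_of_pos_on
      (hcont.intervalIntegrable 0 t) (fun s hs => ?_) ht
    exact mul_pos (Real.exp_pos _)
      (ih (l ∘ Fin.castSucc) (hinj.comp (Fin.castSucc_injective _)) s hs.1)
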